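/- Let n ≥ 2 be an integer, μ > 0, and let ξ ∈ ℝ^{n+1} satisfy ξ·ξ = 0, ξ₀ > 0 and ξ_n = μ. For R > (n−1)/(2μ) set σ(R) := −(n−1)/2 + i·√(μ²R² − (n−1)²/4), and define ψ_R(τ,y) := exp(σ(R)·log(x(τ,y;R)·ξ/(μR))) where x(τ,y;R)·ξ > 0. Then for each fixed (τ,y) ∈ ℝ×ℝ^{n−1} and each i ∈ {1,…,n−1}, lim_{R→∞} (∂²ψ_R/∂yᵢ²)(τ,y) = −ξᵢ²·exp(i·(−τξ₀ − Σ_{j=1}^{n−1} yⱼξⱼ)). Equivalently, the square of the contracted horospheric translation generator n'ᵢ = i∂_{yᵢ} applied to the de Sitter plane wave converges in the flat limit to ξᵢ² times the limiting Minkowski plane wave. -/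

import Mathlib

open Filter Topology

/-- Minkowski inner product of signature (1,n) on `ℝ^{n+1}`. -/
def mdot {n : ℕ} (x ξ : Fin (n + 1) → ℝ) : ℝ :=
  -(x 0 * ξ 0) + ∑ i : Fin n, x i.succ * ξ i.succ

/-- The horospheric point `x(τ,y;R) ∈ ℝ^{n+1}`. -/
noncomputable def horoPt (n : ℕ) (R τ : ℝ) (y : Fin (n - 1) → ℝ) : Fin (n + 1) → ℝ :=
  fun k =>
    if _h0 : (k : ℕ) = 0 then
      R * Real.sinh (τ / R) - ((∑ i, (y i) ^ 2) / (2 * R)) * Real.exp (-τ / R)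
    else if _hn : (k : ℕ) = n then
      R * Real.cosh (τ / R) - ((∑ i, (y i) ^ 2) / (2 * R)) * Real.exp (-τ / R)
    else
      -(y ⟨(k : ℕ) - 1, by have := k.isLt; omega⟩) * Real.exp (-τ / R)

/-- The middle component `ξᵢ`, `i = 1,…,n−1`, of a covector `ξ ∈ ℝ^{n+1}`. -/
def ximid {n : ℕ} (ξ : Fin (n + 1) → ℝ) (i : Fin (n - 1)) : ℝ :=
  ξ ⟨(i : ℕ) + 1, by have := i.isLt; omega⟩

/-- The principal series exponent `σ(R) = −(n−1)/2 + i√(μ²R² − (n−1)²/4)`. -/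
noncomputable def sigmaExp (n : ℕ) (μ R : ℝ) : ℂ :=
  -((n : ℂ) - 1) / 2 + Complex.I * (Real.sqrt (μ ^ 2 * R ^ 2 - ((n : ℝ) - 1) ^ 2 / 4) : ℂ)

/-- The plane wave `ψ_R(τ,y) = (x(τ,y;R)·ξ/(μR))^{σ(R)}` in horospheric coordinates. -/
noncomputable def psiR (n : ℕ) (μ : ℝ) (ξ : Fin (n + 1) → ℝ) (R : ℝ)
    (p : ℝ × (Fin (n - 1) → ℝ)) : ℂ :=
  Complex.exp (sigmaExp n μ R * Complex.log ((mdot (horoPt n R p.1 p.2) ξ / (μ * R) : ℝ) : ℂ))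

/-- Second partial derivative `∂²g/∂yᵢ²` in horospheric coordinates. -/
noncomputable def d2y {n : ℕ} (g : ℝ × (Fin (n - 1) → ℝ) → ℂ) (i : Fin (n - 1))
    (p : ℝ × (Fin (n - 1) → ℝ)) : ℂ :=
  deriv (deriv (fun s : ℝ => g (p.1, Function.update p.2 i s))) (p.2 i)


/-- If `f 0 = 0` and `f` has derivative `d` at `0`, then the "difference quotient with plug"
tends to `d`. -/
lemma slope_trick {f : ℝ → ℝ} {d : ℝ} (hf : HasDerivAt f d 0) (hf0 : f 0 = 0) :
    Tendsto (fun x : ℝ => if x = 0 then d else f x / x) (𝓝 0) (𝓝 d) := by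
  rw [← nhdsNE_sup_pure 0]
  rw [tendsto_sup]
  constructor
  · have h := hasDerivAt_iff_tendsto_slope.mp hf
    refine h.congr' ?_
    filter_upwards [self_mem_nhdsWithin] with x hx
    simp only [Set.mem_compl_iff, Set.mem_singleton_iff] at hx
    simp [slope, hx, hf0, div_eq_inv_mul]
  · have h := tendsto_pure_nhds (fun x : ℝ => if x = 0 then d else f x / x) 0
    simpa using h

lemma quad_hasDerivAt (a b c t : ℝ) :
    HasDerivAt (fun t : ℝ => a + b * t + c * t ^ 2) (b + 2 * c * t) t := by
  have hb : HasDerivAt (fun t : ℝ => a + b * t) b t := by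
    simpa using ((hasDerivAt_id t).const_mul b).const_add a
  have hc : HasDerivAt (fun t : ℝ => c * t ^ 2) (c * (2 * t)) t := by
    simpa using (hasDerivAt_pow 2 t).const_mul c
  have := hb.add hc
  rw [show b + 2 * c * t = b + c * (2 * t) by ring]
  exact this

lemma quadC_hasDerivAt (a b c t : ℝ) :
    HasDerivAt (fun t : ℝ => ((a + b * t + c * t ^ 2 : ℝ) : ℂ))
      ((b + 2 * c * t : ℝ) : ℂ) t :=
  (quad_hasDerivAt a b c t).ofReal_comp

lemma psi_hasDerivAt (σ : ℂ) (a b c t : ℝ) (h : 0 < a + b * t + c * t ^ 2) :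
    HasDerivAt (fun t : ℝ => Complex.exp (σ * Complex.log ((a + b * t + c * t ^ 2 : ℝ) : ℂ)))
      (σ * (((b + 2 * c * t : ℝ) : ℂ) / ((a + b * t + c * t ^ 2 : ℝ) : ℂ)) *
        Complex.exp (σ * Complex.log ((a + b * t + c * t ^ 2 : ℝ) : ℂ))) t := by
  have hslit : ((a + b * t + c * t ^ 2 : ℝ) : ℂ) ∈ Complex.slitPlane := by
    rw [Complex.mem_slitPlane_iff]
    left
    rwa [Complex.ofReal_re]
  have hlog := (Complex.hasDerivAt_log hslit).comp t (quadC_hasDerivAt a b c t)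
  have h2 := (hlog.const_mul σ).cexp
  convert h2 using 1
  simp only [Function.comp_apply, Function.comp_def]
  show _ = Complex.exp (σ * Complex.log ((a + b * t + c * t ^ 2 : ℝ) : ℂ)) *
    (σ * (((a + b * t + c * t ^ 2 : ℝ) : ℂ)⁻¹ * ((b + 2 * c * t : ℝ) : ℂ)))
  ring

lemma key_calc (σ : ℂ) (a b c : ℝ) (s : ℝ) (h : 0 < a + b * s + c * s ^ 2) :
    deriv (deriv (fun t : ℝ => Complex.exp (σ * Complex.log ((a + b * t + c * t ^ 2 : ℝ) : ℂ)))) s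
    = (σ * (((2 * c : ℝ) : ℂ) / ((a + b * s + c * s ^ 2 : ℝ) : ℂ)
          - ((b + 2 * c * s : ℝ) : ℂ) ^ 2 / ((a + b * s + c * s ^ 2 : ℝ) : ℂ) ^ 2)
       + σ ^ 2 * (((b + 2 * c * s : ℝ) : ℂ) ^ 2 / ((a + b * s + c * s ^ 2 : ℝ) : ℂ) ^ 2))
      * Complex.exp (σ * Complex.log ((a + b * s + c * s ^ 2 : ℝ) : ℂ)) := by
  have hU : {t : ℝ | 0 < a + b * t + c * t ^ 2} ∈ 𝓝 s := by
    have hopen : IsOpen {t : ℝ | 0 < a + b * t + c * t ^ 2} := by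
      have : Continuous fun t : ℝ => a + b * t + c * t ^ 2 := by continuity
      exact isOpen_lt continuous_const this
    exact hopen.mem_nhds h
  have hev : deriv (fun t : ℝ => Complex.exp (σ * Complex.log ((a + b * t + c * t ^ 2 : ℝ) : ℂ)))
      =ᶠ[𝓝 s] fun t : ℝ =>
        σ * (((b + 2 * c * t : ℝ) : ℂ) / ((a + b * t + c * t ^ 2 : ℝ) : ℂ)) *
          Complex.exp (σ * Complex.log ((a + b * t + c * t ^ 2 : ℝ) : ℂ)) := by
    filter_upwards [hU] with t ht
    exact (psi_hasDerivAt σ a b c t ht).deriv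
  rw [hev.deriv_eq]
  have hQne : ((a + b * s + c * s ^ 2 : ℝ) : ℂ) ≠ 0 := by
    exact_mod_cast ne_of_gt h
  have hratio : HasDerivAt
      (fun t : ℝ => ((b + 2 * c * t : ℝ) : ℂ) / ((a + b * t + c * t ^ 2 : ℝ) : ℂ))
      ((((2 * c : ℝ) : ℂ) * ((a + b * s + c * s ^ 2 : ℝ) : ℂ)
        - ((b + 2 * c * s : ℝ) : ℂ) * ((b + 2 * c * s : ℝ) : ℂ))
        / ((a + b * s + c * s ^ 2 : ℝ) : ℂ) ^ 2) s := by
    have hN : HasDerivAt (fun t : ℝ => ((b + 2 * c * t : ℝ) : ℂ)) ((2 * c : ℝ) : ℂ) s := by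
      have hr : HasDerivAt (fun t : ℝ => b + 2 * c * t) (2 * c) s := by
        simpa using ((hasDerivAt_id s).const_mul (2 * c)).const_add b
      exact hr.ofReal_comp
    exact hN.div (quadC_hasDerivAt a b c s) hQne
  have hmul := ((hratio.const_mul σ).mul (psi_hasDerivAt σ a b c s h)).deriv
  refine hmul.trans ?_
  have alg : ∀ z w u E : ℂ, z ≠ 0 →
      σ * ((u * z - w * w) / z ^ 2) * E + σ * (w / z) * (σ * (w / z) * E)
      = (σ * (u / z - w ^ 2 / z ^ 2) + σ ^ 2 * (w ^ 2 / z ^ 2)) * E := by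
    intro z w u E hz
    field_simp
  exact alg _ _ _ _ hQne

lemma mdot_horoPt (m : ℕ) (μ R τ : ℝ) (ξ : Fin (m + 2 + 1) → ℝ)
    (hshell : ξ ⟨m + 2, Nat.lt_succ_self _⟩ = μ) (w : Fin (m + 1) → ℝ) :
    mdot (horoPt (m + 2) R τ w) ξ
    = μ * (R * Real.cosh (τ / R)) - ξ 0 * (R * Real.sinh (τ / R))
      - Real.exp (-τ / R) *
        ((∑ j, (w j) ^ 2) / (2 * R) * (μ - ξ 0) + ∑ j, w j * ximid ξ j) := by
  have h0 : horoPt (m + 2) R τ w 0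
      = R * Real.sinh (τ / R) - ((∑ j, (w j) ^ 2) / (2 * R)) * Real.exp (-τ / R) := by
    simp [horoPt]
  have hlast : horoPt (m + 2) R τ w (Fin.last (m + 1)).succ
      = R * Real.cosh (τ / R) - ((∑ j, (w j) ^ 2) / (2 * R)) * Real.exp (-τ / R) := by
    rw [horoPt]
    rw [dif_neg (by simp), dif_pos (by simp)]
    rfl
  have hξlast : ξ (Fin.last (m + 1)).succ = μ := by
    rw [← hshell]
    congr 1
  have hmid : ∀ i : Fin (m + 1), horoPt (m + 2) R τ w ((Fin.castSucc i).succ)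
      = -(w i) * Real.exp (-τ / R) := by
    intro i
    have hi := i.isLt
    rw [horoPt]
    rw [dif_neg (by simp), dif_neg (by simp; omega)]
    congr 2
  have hξmid : ∀ i : Fin (m + 1), ξ ((Fin.castSucc i).succ) = ximid ξ i := by
    intro i
    rw [ximid]
    congr 1
  unfold mdot
  rw [Fin.sum_univ_castSucc]
  simp only [hmid, hξmid, h0, hlast, hξlast]
  have hsum : ∑ i : Fin (m + 1), -(w i) * Real.exp (-τ / R) * ximid ξ i
      = -(Real.exp (-τ / R)) * ∑ i, w i * ximid ξ i := by
    rw [Finset.mul_sum]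
    exact Finset.sum_congr rfl (fun i _ => by ring)
  rw [hsum]
  ring


lemma sum_update_mul {k : ℕ} (y f : Fin k → ℝ) (i : Fin k) (s : ℝ) :
    ∑ j, Function.update y i s j * f j = (∑ j, y j * f j) - y i * f i + s * f i := by
  have h : ∀ j, Function.update y i s j * f j
      = Function.update (fun j => y j * f j) i (s * f i) j := by
    intro j
    rcases eq_or_ne j i with rfl | hj
    · simp
    · simp [Function.update_of_ne hj]
  rw [Finset.sum_congr rfl (fun j _ => h j), Finset.sum_update_of_mem (Finset.mem_univ i),
    Finset.sdiff_singleton_eq_erase, Finset.sum_erase_eq_sub (Finset.mem_univ i)]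
  ring

lemma sum_update_sq {k : ℕ} (y : Fin k → ℝ) (i : Fin k) (s : ℝ) :
    ∑ j, (Function.update y i s j) ^ 2 = (∑ j, (y j) ^ 2) - (y i) ^ 2 + s ^ 2 := by
  have h : ∀ j, (Function.update y i s j) ^ 2
      = Function.update (fun j => (y j) ^ 2) i (s ^ 2) j := by
    intro j
    rcases eq_or_ne j i with rfl | hj
    · simp
    · simp [Function.update_of_ne hj]
  rw [Finset.sum_congr rfl (fun j _ => h j), Finset.sum_update_of_mem (Finset.mem_univ i),
    Finset.sdiff_singleton_eq_erase, Finset.sum_erase_eq_sub (Finset.mem_univ i)]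
  ring

lemma base_from_mul {u : ℝ → ℝ} {l : ℝ} (hu : Tendsto (fun R => R * u R) atTop (𝓝 l)) :
    Tendsto u atTop (𝓝 0) := by
  have h := hu.mul tendsto_inv_atTop_zero
  rw [mul_zero] at h
  apply h.congr'
  filter_upwards [eventually_ne_atTop (0 : ℝ)] with R hR
  field_simp

lemma sqrt_ratio_tendsto (c μ : ℝ) (hμ : 0 < μ) :
    Tendsto (fun R : ℝ => Real.sqrt (μ ^ 2 * R ^ 2 - c) / R) atTop (𝓝 μ) := by
  have hR2 : Tendsto (fun R : ℝ => R ^ 2) atTop atTop := tendsto_pow_atTop two_ne_zero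
  have hc : Tendsto (fun R : ℝ => c / R ^ 2) atTop (𝓝 0) := tendsto_const_nhds.div_atTop hR2
  have hin : Tendsto (fun R : ℝ => μ ^ 2 - c / R ^ 2) atTop (𝓝 (μ ^ 2)) := by
    simpa using tendsto_const_nhds.sub hc
  have hs : Tendsto (fun R : ℝ => Real.sqrt (μ ^ 2 - c / R ^ 2)) atTop (𝓝 μ) := by
    have h2 := (Real.continuous_sqrt.tendsto (μ ^ 2)).comp hin
    rwa [Real.sqrt_sq hμ.le] at h2
  apply hs.congr'
  have hbig : Tendsto (fun R : ℝ => μ ^ 2 * R ^ 2 - c) atTop atTop := by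
    have := tendsto_atTop_add_const_right atTop (-c) (hR2.const_mul_atTop (by positivity : (0:ℝ) < μ ^ 2))
    simpa [sub_eq_add_neg] using this
  filter_upwards [eventually_gt_atTop (0 : ℝ), hbig.eventually_ge_atTop 0] with R hR hnn
  rw [show μ ^ 2 - c / R ^ 2 = (μ ^ 2 * R ^ 2 - c) / R ^ 2 by field_simp]
  rw [Real.sqrt_div hnn, Real.sqrt_sq hR.le]

lemma sigma_mul_tendsto (n : ℕ) (μ : ℝ) (hμ : 0 < μ) (u : ℝ → ℝ) (l : ℝ)
    (hu : Tendsto (fun R => R * u R) atTop (𝓝 l)) :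
    Tendsto (fun R => sigmaExp n μ R * ((u R : ℝ) : ℂ)) atTop
      (𝓝 (Complex.I * ((μ * l : ℝ) : ℂ))) := by
  have hu0 : Tendsto u atTop (𝓝 0) := base_from_mul hu
  have hsq := sqrt_ratio_tendsto (((n : ℝ) - 1) ^ 2 / 4) μ hμ
  have hpart1 : Tendsto (fun R : ℝ => -((n : ℂ) - 1) / 2 * ((u R : ℝ) : ℂ)) atTop (𝓝 0) := by
    have h2 : Tendsto (fun R : ℝ => ((u R : ℝ) : ℂ)) atTop (𝓝 ((0 : ℝ) : ℂ)) :=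
      (Complex.continuous_ofReal.tendsto 0).comp hu0
    simpa using h2.const_mul (-((n : ℂ) - 1) / 2)
  have hpart2 : Tendsto
      (fun R : ℝ => Complex.I *
        ((Real.sqrt (μ ^ 2 * R ^ 2 - ((n : ℝ) - 1) ^ 2 / 4) / R * (R * u R) : ℝ) : ℂ))
      atTop (𝓝 (Complex.I * ((μ * l : ℝ) : ℂ))) := by
    have hr := hsq.mul hu
    exact ((Complex.continuous_ofReal.tendsto _).comp hr).const_mul Complex.I
  have hsum := hpart1.add hpart2
  rw [zero_add] at hsum
  apply hsum.congr'
  filter_upwards [eventually_ne_atTop (0 : ℝ)] with R hR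
  have hRC : (R : ℂ) ≠ 0 := Complex.ofReal_ne_zero.mpr hR
  rw [sigmaExp]
  push_cast
  field_simp

lemma log_limit {A : ℝ → ℝ} {l : ℝ} (h5 : Tendsto (fun R => R * (A R - 1)) atTop (𝓝 l)) :
    Tendsto A atTop (𝓝 1) ∧ Tendsto (fun R => R * Real.log (A R)) atTop (𝓝 l) := by
  have hA : Tendsto A atTop (𝓝 1) := by
    have h := h5.mul tendsto_inv_atTop_zero
    rw [mul_zero] at h
    have h2 := h.add_const 1
    rw [zero_add] at h2
    apply h2.congr'
    filter_upwards [eventually_ne_atTop (0 : ℝ)] with R hR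
    field_simp
    ring
  refine ⟨hA, ?_⟩
  have hu0 : Tendsto (fun R => A R - 1) atTop (𝓝 0) := by simpa using hA.sub_const 1
  have hder : HasDerivAt (fun x : ℝ => Real.log (1 + x)) 1 0 := by
    have h1 : HasDerivAt (fun x : ℝ => 1 + x) 1 0 := by
      simpa using (hasDerivAt_id (0 : ℝ)).const_add 1
    have h2 := (Real.hasDerivAt_log (by norm_num : (1 : ℝ) + 0 ≠ 0)).comp 0 h1
    simpa [Function.comp_def] using h2
  have hφ := slope_trick hder (by simp)
  have hcomp := hφ.comp hu0
  have hm := h5.mul hcomp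
  rw [mul_one] at hm
  apply hm.congr
  intro R
  simp only [Function.comp_apply]
  by_cases h : A R - 1 = 0
  · have hA1 : A R = 1 := by linarith
    simp [if_pos h, hA1]
  · rw [if_neg h]
    rw [show 1 + (A R - 1) = A R by ring]
    field_simp

lemma Rsinh_tendsto (τ : ℝ) : Tendsto (fun R : ℝ => R * Real.sinh (τ / R)) atTop (𝓝 τ) := by
  have hinv : Tendsto (fun R : ℝ => τ / R) atTop (𝓝 0) := tendsto_const_nhds.div_atTop tendsto_id
  have hφ := slope_trick (f := Real.sinh) (d := 1) (by simpa using Real.hasDerivAt_sinh 0) (by simp)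
  have h := (hφ.comp hinv).const_mul τ
  rw [mul_one] at h
  apply h.congr'
  filter_upwards [eventually_ne_atTop (0 : ℝ)] with R hR
  simp only [Function.comp_apply]
  by_cases hτ : τ = 0
  · simp [hτ]
  · rw [if_neg (div_ne_zero hτ hR)]
    field_simp

lemma Rcosh_tendsto (τ : ℝ) :
    Tendsto (fun R : ℝ => R * (Real.cosh (τ / R) - 1)) atTop (𝓝 0) := by
  have hinv : Tendsto (fun R : ℝ => τ / R) atTop (𝓝 0) := tendsto_const_nhds.div_atTop tendsto_id
  have hder : HasDerivAt (fun x : ℝ => Real.cosh x - 1) 0 0 := by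
    simpa using (Real.hasDerivAt_cosh 0).sub_const 1
  have hφ := slope_trick hder (by simp)
  have h := (hφ.comp hinv).const_mul τ
  rw [mul_zero] at h
  apply h.congr'
  filter_upwards [eventually_ne_atTop (0 : ℝ)] with R hR
  simp only [Function.comp_apply]
  by_cases hτ : τ = 0
  · simp [hτ]
  · rw [if_neg (div_ne_zero hτ hR)]
    field_simp

lemma assembly (sg : ℝ → ℂ) (aa bb cc : ℝ → ℝ) (s0 : ℝ) (Lc : ℂ) (κ : ℝ)
    (hA1 : Tendsto (fun R => aa R + bb R * s0 + cc R * s0 ^ 2) atTop (𝓝 1))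
    (hσc : Tendsto (fun R => sg R * ((cc R : ℝ) : ℂ)) atTop (𝓝 0))
    (hσD : Tendsto (fun R => sg R * ((bb R + 2 * cc R * s0 : ℝ) : ℂ)) atTop
      (𝓝 (-(Complex.I * (κ : ℂ)))))
    (hD0 : Tendsto (fun R => bb R + 2 * cc R * s0) atTop (𝓝 0))
    (hexp : Tendsto (fun R => Complex.exp
        (sg R * Complex.log ((aa R + bb R * s0 + cc R * s0 ^ 2 : ℝ) : ℂ))) atTop
      (𝓝 (Complex.exp Lc))) :
    Tendsto (fun R =>
      (sg R * (((2 * cc R : ℝ) : ℂ) / ((aa R + bb R * s0 + cc R * s0 ^ 2 : ℝ) : ℂ)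
          - ((bb R + 2 * cc R * s0 : ℝ) : ℂ) ^ 2 / ((aa R + bb R * s0 + cc R * s0 ^ 2 : ℝ) : ℂ) ^ 2)
        + sg R ^ 2 * (((bb R + 2 * cc R * s0 : ℝ) : ℂ) ^ 2
            / ((aa R + bb R * s0 + cc R * s0 ^ 2 : ℝ) : ℂ) ^ 2))
        * Complex.exp (sg R * Complex.log ((aa R + bb R * s0 + cc R * s0 ^ 2 : ℝ) : ℂ)))
      atTop (𝓝 ((-(Complex.I * (κ : ℂ))) ^ 2 * Complex.exp Lc)) := by
  have hAc : Tendsto (fun R => ((aa R + bb R * s0 + cc R * s0 ^ 2 : ℝ) : ℂ)) atTop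
      (𝓝 1) := by
    have h2 : Tendsto (fun R => ((aa R + bb R * s0 + cc R * s0 ^ 2 : ℝ) : ℂ)) atTop
        (𝓝 ((1 : ℝ) : ℂ)) := (Complex.continuous_ofReal.tendsto 1).comp hA1
    rwa [Complex.ofReal_one] at h2
  have hDc : Tendsto (fun R => ((bb R + 2 * cc R * s0 : ℝ) : ℂ)) atTop (𝓝 0) := by
    have h2 : Tendsto (fun R => ((bb R + 2 * cc R * s0 : ℝ) : ℂ)) atTop
        (𝓝 ((0 : ℝ) : ℂ)) := (Complex.continuous_ofReal.tendsto 0).comp hD0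
    rwa [Complex.ofReal_zero] at h2
  have h1 := (hσc.const_mul (2 : ℂ)).div hAc one_ne_zero
  have hq := hσD.div hAc one_ne_zero
  have h2 := hq.mul (hDc.div hAc one_ne_zero)
  have h3 := hq.pow 2
  have hfinal := ((h1.sub h2).add h3).mul hexp
  have hC : (2 * (0 : ℂ) / 1 - -(Complex.I * (κ : ℂ)) / 1 * (0 / 1)
      + (-(Complex.I * (κ : ℂ)) / 1) ^ 2) * Complex.exp Lc
      = (-(Complex.I * (κ : ℂ))) ^ 2 * Complex.exp Lc := by
    norm_num
  rw [hC] at hfinal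
  apply hfinal.congr
  intro R
  simp only [Pi.div_apply]
  by_cases hQ : ((aa R + bb R * s0 + cc R * s0 ^ 2 : ℝ) : ℂ) = 0
  · simp [hQ]
  · field_simp
    push_cast
    ring


/-- On the mass shell `ξ_n = μ`, the square of the contracted horospheric translation
generator applied to the de Sitter plane wave converges in the flat limit:
`∂²ψ_R/∂yᵢ² → −ξᵢ²·e^{i(−τξ₀ − Σⱼ yⱼξⱼ)}` pointwise as `R → ∞`. -/
theorem flat_limit_translation_squared (n : ℕ) (hn : 2 ≤ n) (μ : ℝ) (hμ : 0 < μ)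
    (ξ : Fin (n + 1) → ℝ) (hnull : mdot ξ ξ = 0) (hpos : 0 < ξ 0)
    (hshell : ξ ⟨n, Nat.lt_succ_self n⟩ = μ)
    (τ : ℝ) (y : Fin (n - 1) → ℝ) (i : Fin (n - 1)) :
    Tendsto (fun R : ℝ => d2y (psiR n μ ξ R) i (τ, y)) atTop
      (𝓝 (-((ximid ξ i : ℂ)) ^ 2 *
        Complex.exp (Complex.I *
          ((-(τ * ξ 0) - ∑ j : Fin (n - 1), y j * ximid ξ j : ℝ) : ℂ)))) := by
  obtain ⟨m, rfl⟩ : ∃ m, n = m + 2 := ⟨n - 2, by omega⟩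
  have hμ' : μ ≠ 0 := ne_of_gt hμ
  -- basic scalar limits
  have h2 : Tendsto (fun R : ℝ => Real.exp (-τ / R)) atTop (𝓝 1) := by
    have hin : Tendsto (fun R : ℝ => -τ / R) atTop (𝓝 0) :=
      tendsto_const_nhds.div_atTop tendsto_id
    have := (Real.continuous_exp.tendsto 0).comp hin
    simpa [Function.comp_def] using this
  have h3 := Rsinh_tendsto τ
  have h4 := Rcosh_tendsto τ
  have hT : Tendsto (fun R : ℝ => (∑ j, (y j) ^ 2) / (2 * R) * (μ - ξ 0) + (∑ j, y j * ximid ξ j)) atTop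
      (𝓝 (0 * (μ - ξ 0) + (∑ j, y j * ximid ξ j))) := by
    apply Tendsto.add_const
    apply Tendsto.mul_const
    exact tendsto_const_nhds.div_atTop (tendsto_id.const_mul_atTop two_pos)
  have h5main : Tendsto (fun R : ℝ =>
      (μ * (R * (Real.cosh (τ / R) - 1)) - ξ 0 * (R * Real.sinh (τ / R))
        - Real.exp (-τ / R) * ((∑ j, (y j) ^ 2) / (2 * R) * (μ - ξ 0) + (∑ j, y j * ximid ξ j))) / μ) atTop
      (𝓝 ((μ * 0 - ξ 0 * τ - 1 * (0 * (μ - ξ 0) + (∑ j, y j * ximid ξ j))) / μ)) := by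
    apply Tendsto.div_const
    exact ((h4.const_mul μ).sub (h3.const_mul (ξ 0))).sub (h2.mul hT)
  have h5 : Tendsto (fun R : ℝ => R * ((((μ * (R * Real.cosh (τ / R)) - ξ 0 * (R * Real.sinh (τ / R)) - Real.exp (-τ / R) * (((∑ j, (y j) ^ 2) - (y i) ^ 2) / (2 * R) * (μ - ξ 0) + ((∑ j, y j * ximid ξ j) - y i * ximid ξ i))) / (μ * R)) + (-(Real.exp (-τ / R)) * ximid ξ i / (μ * R)) * y i + (-(Real.exp (-τ / R)) * (μ - ξ 0) / (2 * R) / (μ * R)) * y i ^ 2) - 1)) atTop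
      (𝓝 ((-(τ * ξ 0) - (∑ j, y j * ximid ξ j)) / μ)) := by
    rw [show (μ * 0 - ξ 0 * τ - 1 * (0 * (μ - ξ 0) + (∑ j, y j * ximid ξ j))) / μ
      = (-(τ * ξ 0) - (∑ j, y j * ximid ξ j)) / μ by ring] at h5main
    apply h5main.congr'
    filter_upwards [eventually_ne_atTop (0 : ℝ)] with R hR
    field_simp
    ring
  obtain ⟨h6, h7⟩ := log_limit h5
  have h9 := sigma_mul_tendsto (m + 2) μ hμ (fun R => Real.log (((μ * (R * Real.cosh (τ / R)) - ξ 0 * (R * Real.sinh (τ / R)) - Real.exp (-τ / R) * (((∑ j, (y j) ^ 2) - (y i) ^ 2) / (2 * R) * (μ - ξ 0) + ((∑ j, y j * ximid ξ j) - y i * ximid ξ i))) / (μ * R)) + (-(Real.exp (-τ / R)) * ximid ξ i / (μ * R)) * y i + (-(Real.exp (-τ / R)) * (μ - ξ 0) / (2 * R) / (μ * R)) * y i ^ 2))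
    ((-(τ * ξ 0) - (∑ j, y j * ximid ξ j)) / μ) h7
  rw [show (μ * ((-(τ * ξ 0) - (∑ j, y j * ximid ξ j)) / μ) : ℝ) = -(τ * ξ 0) - (∑ j, y j * ximid ξ j) by field_simp] at h9
  -- D limits
  have h10main : Tendsto (fun R : ℝ =>
      (-(Real.exp (-τ / R)) * ximid ξ i - Real.exp (-τ / R) * (μ - ξ 0) * y i / R) / μ) atTop
      (𝓝 ((-1 * ximid ξ i - 0) / μ)) := by
    apply Tendsto.div_const
    apply Tendsto.sub
    · exact h2.neg.mul_const (ximid ξ i)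
    · exact ((h2.mul_const (μ - ξ 0)).mul_const (y i)).div_atTop tendsto_id
  have h10 : Tendsto (fun R : ℝ => R * ((-(Real.exp (-τ / R)) * ximid ξ i / (μ * R)) + 2 * (-(Real.exp (-τ / R)) * (μ - ξ 0) / (2 * R) / (μ * R)) * y i)) atTop
      (𝓝 ((-1 * ximid ξ i - 0) / μ)) := by
    apply h10main.congr'
    filter_upwards [eventually_ne_atTop (0 : ℝ)] with R hR
    field_simp
    ring
  have hσD := sigma_mul_tendsto (m + 2) μ hμ (fun R => (-(Real.exp (-τ / R)) * ximid ξ i / (μ * R)) + 2 * (-(Real.exp (-τ / R)) * (μ - ξ 0) / (2 * R) / (μ * R)) * y i)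
    ((-1 * ximid ξ i - 0) / μ) h10
  rw [show (μ * ((-1 * ximid ξ i - 0) / μ) : ℝ) = -(ximid ξ i) by field_simp; ring] at hσD
  rw [show Complex.I * ((-(ximid ξ i) : ℝ) : ℂ) = -(Complex.I * ((ximid ξ i : ℝ) : ℂ)) by
    push_cast; ring] at hσD
  have hD0 : Tendsto (fun R : ℝ => (-(Real.exp (-τ / R)) * ximid ξ i / (μ * R)) + 2 * (-(Real.exp (-τ / R)) * (μ - ξ 0) / (2 * R) / (μ * R)) * y i) atTop (𝓝 0) := base_from_mul h10
  -- cc limits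
  have h12main : Tendsto (fun R : ℝ =>
      -(Real.exp (-τ / R)) * (μ - ξ 0) / μ / (2 * R)) atTop (𝓝 0) :=
    Tendsto.div_atTop ((h2.neg.mul_const (μ - ξ 0)).div_const μ)
      (tendsto_id.const_mul_atTop two_pos)
  have h12 : Tendsto (fun R : ℝ => R * (-(Real.exp (-τ / R)) * (μ - ξ 0) / (2 * R) / (μ * R))) atTop (𝓝 0) := by
    apply h12main.congr'
    filter_upwards [eventually_ne_atTop (0 : ℝ)] with R hR
    field_simp
  have hσc := sigma_mul_tendsto (m + 2) μ hμ (fun R => -(Real.exp (-τ / R)) * (μ - ξ 0) / (2 * R) / (μ * R)) 0 h12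
  rw [show (μ * (0 : ℝ) : ℝ) = 0 by ring, Complex.ofReal_zero, mul_zero] at hσc
  -- exponential factor
  have hApos : ∀ᶠ R in atTop, 0 < ((μ * (R * Real.cosh (τ / R)) - ξ 0 * (R * Real.sinh (τ / R)) - Real.exp (-τ / R) * (((∑ j, (y j) ^ 2) - (y i) ^ 2) / (2 * R) * (μ - ξ 0) + ((∑ j, y j * ximid ξ j) - y i * ximid ξ i))) / (μ * R)) + (-(Real.exp (-τ / R)) * ximid ξ i / (μ * R)) * y i + (-(Real.exp (-τ / R)) * (μ - ξ 0) / (2 * R) / (μ * R)) * y i ^ 2 :=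
    h6.eventually (eventually_gt_nhds one_pos)
  have hexp : Tendsto (fun R : ℝ => Complex.exp (sigmaExp (m + 2) μ R *
      Complex.log (((((μ * (R * Real.cosh (τ / R)) - ξ 0 * (R * Real.sinh (τ / R)) - Real.exp (-τ / R) * (((∑ j, (y j) ^ 2) - (y i) ^ 2) / (2 * R) * (μ - ξ 0) + ((∑ j, y j * ximid ξ j) - y i * ximid ξ i))) / (μ * R)) + (-(Real.exp (-τ / R)) * ximid ξ i / (μ * R)) * y i + (-(Real.exp (-τ / R)) * (μ - ξ 0) / (2 * R) / (μ * R)) * y i ^ 2 : ℝ)) : ℂ))) atTop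
      (𝓝 (Complex.exp (Complex.I * ((-(τ * ξ 0) - (∑ j, y j * ximid ξ j) : ℝ) : ℂ)))) := by
    have hinner : Tendsto (fun R : ℝ => sigmaExp (m + 2) μ R *
        Complex.log (((((μ * (R * Real.cosh (τ / R)) - ξ 0 * (R * Real.sinh (τ / R)) - Real.exp (-τ / R) * (((∑ j, (y j) ^ 2) - (y i) ^ 2) / (2 * R) * (μ - ξ 0) + ((∑ j, y j * ximid ξ j) - y i * ximid ξ i))) / (μ * R)) + (-(Real.exp (-τ / R)) * ximid ξ i / (μ * R)) * y i + (-(Real.exp (-τ / R)) * (μ - ξ 0) / (2 * R) / (μ * R)) * y i ^ 2 : ℝ)) : ℂ)) atTop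
        (𝓝 (Complex.I * ((-(τ * ξ 0) - (∑ j, y j * ximid ξ j) : ℝ) : ℂ))) := by
      apply h9.congr'
      filter_upwards [hApos] with R hA
      rw [Complex.ofReal_log hA.le]
    exact (Complex.continuous_exp.tendsto _).comp hinner
  -- assemble the limit of the closed-form second derivative
  have hbig := assembly (fun R => sigmaExp (m + 2) μ R) (fun R => (μ * (R * Real.cosh (τ / R)) - ξ 0 * (R * Real.sinh (τ / R)) - Real.exp (-τ / R) * (((∑ j, (y j) ^ 2) - (y i) ^ 2) / (2 * R) * (μ - ξ 0) + ((∑ j, y j * ximid ξ j) - y i * ximid ξ i))) / (μ * R))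
    (fun R => -(Real.exp (-τ / R)) * ximid ξ i / (μ * R)) (fun R => -(Real.exp (-τ / R)) * (μ - ξ 0) / (2 * R) / (μ * R)) (y i)
    (Complex.I * ((-(τ * ξ 0) - (∑ j, y j * ximid ξ j) : ℝ) : ℂ)) (ximid ξ i) h6 hσc hσD hD0 hexp
  rw [show (-(Complex.I * ((ximid ξ i : ℝ) : ℂ))) ^ 2 = -((ximid ξ i : ℂ)) ^ 2 by
    rw [neg_sq, mul_pow, Complex.I_sq]; ring] at hbig
  refine Tendsto.congr' ?_ hbig
  filter_upwards [hApos, eventually_ne_atTop (0 : ℝ)] with R hA hR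
  have hfun : (fun s : ℝ => psiR (m + 2) μ ξ R (τ, Function.update y i s))
      = fun s : ℝ => Complex.exp (sigmaExp (m + 2) μ R *
          Complex.log ((((μ * (R * Real.cosh (τ / R)) - ξ 0 * (R * Real.sinh (τ / R)) - Real.exp (-τ / R) * (((∑ j, (y j) ^ 2) - (y i) ^ 2) / (2 * R) * (μ - ξ 0) + ((∑ j, y j * ximid ξ j) - y i * ximid ξ i))) / (μ * R)) + (-(Real.exp (-τ / R)) * ximid ξ i / (μ * R)) * s + (-(Real.exp (-τ / R)) * (μ - ξ 0) / (2 * R) / (μ * R)) * s ^ 2 : ℝ) : ℂ)) := by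
    funext s
    have hmd : mdot (horoPt (m + 2) R τ (Function.update y i s)) ξ / (μ * R)
        = ((μ * (R * Real.cosh (τ / R)) - ξ 0 * (R * Real.sinh (τ / R)) - Real.exp (-τ / R) * (((∑ j, (y j) ^ 2) - (y i) ^ 2) / (2 * R) * (μ - ξ 0) + ((∑ j, y j * ximid ξ j) - y i * ximid ξ i))) / (μ * R)) + (-(Real.exp (-τ / R)) * ximid ξ i / (μ * R)) * s + (-(Real.exp (-τ / R)) * (μ - ξ 0) / (2 * R) / (μ * R)) * s ^ 2 := by
      rw [mdot_horoPt m μ R τ ξ hshell (Function.update y i s), sum_update_sq, sum_update_mul]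
      rw [show (∑ x : Fin (m + 1), y x ^ 2) = (∑ j, (y j) ^ 2) from rfl,
        show (∑ j : Fin (m + 1), y j * ximid ξ j) = (∑ j, y j * ximid ξ j) from rfl]
      ring
    show Complex.exp (sigmaExp (m + 2) μ R * Complex.log
        ((mdot (horoPt (m + 2) R τ (Function.update y i s)) ξ / (μ * R) : ℝ) : ℂ)) = _
    rw [hmd]
  have hd2 : d2y (psiR (m + 2) μ ξ R) i (τ, y)
      = deriv (deriv (fun s : ℝ => psiR (m + 2) μ ξ R (τ, Function.update y i s))) (y i) := rfl
  rw [hd2, hfun, key_calc (sigmaExp (m + 2) μ R) ((μ * (R * Real.cosh (τ / R)) - ξ 0 * (R * Real.sinh (τ / R)) - Real.exp (-τ / R) * (((∑ j, (y j) ^ 2) - (y i) ^ 2) / (2 * R) * (μ - ξ 0) + ((∑ j, y j * ximid ξ j) - y i * ximid ξ i))) / (μ * R)) (-(Real.exp (-τ / R)) * ximid ξ i / (μ * R)) (-(Real.exp (-τ / R)) * (μ - ξ 0) / (2 * R) / (μ * R)) (y i) hA]
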